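/- Let f ≥ 3, K = ℚ(ζ_f), and n = φ(f) ≥ 2, with ring of integers O_K = ℤ[ζ_f]. For every d ≥ 1 and every d × d unitriangular matrix M over K, there exists a d × d unitriangular matrix U with entries in O_K such that, with ‖·‖ the operator norm induced by the embedding of K^d into ℂ^{nd} via the n complex embeddings of K, both ‖MU‖ ≤ (n^{3/2}·d)^{⌈log₂ d⌉} and ‖(MU)⁻¹‖ ≤ (n^{3/2}·d)^{⌈log₂ d⌉}. -/

import Mathlib

open Matrix
open scoped Matrix.Norms.L2Operator Classical

noncomputable instance (f : ℕ+) : NumberField (CyclotomicField f ℚ) :=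
  letI := CyclotomicField.algebra (f : ℕ) ℚ
  IsCyclotomicExtension.numberField {(f : ℕ)} ℚ (CyclotomicField f ℚ)

/-- The complex matrix describing the `ℂ`-linear action of a matrix `A` over a number field
`K` on `ℂ^{nd}`, where `K^d` is embedded into `ℂ^{nd}` via the `n` complex embeddings of
`K`. -/
noncomputable def embMatrix {K : Type*} [Field K] {d : ℕ}
    (A : Matrix (Fin d) (Fin d) K) :
    Matrix ((K →+* ℂ) × Fin d) ((K →+* ℂ) × Fin d) ℂ :=
  Matrix.of fun p q => if p.1 = q.1 then p.1 (A p.2 q.2) else 0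

lemma l2_opNorm_le_of_entries {ι : Type*} [Fintype ι] [DecidableEq ι]
    (X : Matrix ι ι ℂ) (c : ℝ) (hc : 0 ≤ c)
    (h : ∑ p, ∑ q, ‖X p q‖ ^ 2 ≤ c ^ 2) : ‖X‖ ≤ c := by
  rw [Matrix.l2_opNorm_def]
  refine ContinuousLinearMap.opNorm_le_bound _ hc ?_
  intro v
  have hnn : (0:ℝ) ≤ c * ‖v‖ := mul_nonneg hc (norm_nonneg _)
  have key : ‖(Matrix.toEuclideanLin X) v‖ ^ 2 ≤ (c * ‖v‖) ^ 2 := by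
    set w : ι → ℂ := WithLp.equiv 2 (ι → ℂ) v with hw
    have hv2 : ‖v‖ ^ 2 = ∑ q, ‖w q‖ ^ 2 := by
      rw [EuclideanSpace.norm_eq, Real.sq_sqrt (by positivity)]
      rfl
    have h1 : ‖(Matrix.toEuclideanLin X) v‖ ^ 2 = ∑ p, ‖(X *ᵥ w) p‖ ^ 2 := by
      rw [Matrix.toEuclideanLin_apply, EuclideanSpace.norm_eq,
        Real.sq_sqrt (by positivity)]
      rfl
    rw [h1]
    calc ∑ p, ‖(X *ᵥ w) p‖ ^ 2
        ≤ ∑ p, ((∑ q, ‖X p q‖ ^ 2) * (∑ q, ‖w q‖ ^ 2)) := by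
          refine Finset.sum_le_sum fun p _ => ?_
          have h2 : ‖(X *ᵥ w) p‖ ≤ ∑ q, ‖X p q‖ * ‖w q‖ := by
            refine (norm_sum_le _ _).trans (le_of_eq ?_)
            simp [norm_mul]
          calc ‖(X *ᵥ w) p‖ ^ 2 ≤ (∑ q, ‖X p q‖ * ‖w q‖) ^ 2 :=
                pow_le_pow_left₀ (norm_nonneg _) h2 2
            _ ≤ (∑ q, ‖X p q‖ ^ 2) * (∑ q, ‖w q‖ ^ 2) :=
                Finset.sum_mul_sq_le_sq_mul_sq _ _ _
      _ = (∑ p, ∑ q, ‖X p q‖ ^ 2) * (∑ q, ‖w q‖ ^ 2) := by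
          rw [← Finset.sum_mul]
      _ ≤ c ^ 2 * ‖v‖ ^ 2 := by
          rw [hv2]
          exact mul_le_mul_of_nonneg_right h (by positivity)
      _ = (c * ‖v‖) ^ 2 := by ring
  have hcoe : ‖(toEuclideanLin.trans LinearMap.toContinuousLinearMap) X v‖ = ‖(Matrix.toEuclideanLin X) v‖ := rfl
  rw [hcoe]
  nlinarith [norm_nonneg ((Matrix.toEuclideanLin X) v)]

lemma embMatrix_one {K : Type*} [Field K] {d : ℕ} :
    embMatrix (1 : Matrix (Fin d) (Fin d) K) = 1 := by
  ext ⟨σ, i⟩ ⟨τ, j⟩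
  simp only [embMatrix, Matrix.of_apply, Matrix.one_apply, Prod.mk.injEq]
  by_cases h1 : σ = τ <;> by_cases h2 : i = j <;> simp [h1, h2]

lemma norm_one_matrix_le {ι : Type*} [Fintype ι] [DecidableEq ι] :
    ‖(1 : Matrix ι ι ℂ)‖ ≤ 1 := by
  rw [Matrix.cstar_norm_def, _root_.map_one, ContinuousLinearMap.one_def]
  exact ContinuousLinearMap.norm_id_le

lemma embMatrix_norm_le {K : Type*} [Field K] [Fintype (K →+* ℂ)] {d : ℕ}
    (A : Matrix (Fin d) (Fin d) K) (c : ℝ) (hc : 0 ≤ c)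
    (hA : ∀ (σ : K →+* ℂ) i j, ‖σ (A i j)‖ ≤ c) :
    ‖embMatrix A‖ ≤ Real.sqrt (Fintype.card (K →+* ℂ)) * d * c := by
  refine l2_opNorm_le_of_entries _ _ (by positivity) ?_
  have hsum : ∑ p : (K →+* ℂ) × Fin d, ∑ q : (K →+* ℂ) × Fin d, ‖embMatrix A p q‖ ^ 2
      = ∑ σ : K →+* ℂ, ∑ i : Fin d, ∑ j : Fin d, ‖σ (A i j)‖ ^ 2 := by
    rw [Fintype.sum_prod_type]
    refine Finset.sum_congr rfl fun σ _ => Finset.sum_congr rfl fun i _ => ?_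
    rw [Fintype.sum_prod_type]
    rw [Finset.sum_comm]
    have : ∀ j : Fin d, ∑ τ : K →+* ℂ, ‖embMatrix A (σ, i) (τ, j)‖ ^ 2
        = ‖σ (A i j)‖ ^ 2 := by
      intro j
      have : ∀ τ : K →+* ℂ, ‖embMatrix A (σ, i) (τ, j)‖ ^ 2
          = if σ = τ then ‖σ (A i j)‖ ^ 2 else 0 := by
        intro τ
        simp only [embMatrix, Matrix.of_apply]
        by_cases h : σ = τ <;> simp [h]
      simp_rw [this]
      simp
    simp_rw [this]
  rw [hsum]
  have hb : ∀ σ : K →+* ℂ, ∑ i : Fin d, ∑ j : Fin d, ‖σ (A i j)‖ ^ 2 ≤ d * d * c ^ 2 := by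
    intro σ
    calc ∑ i : Fin d, ∑ j : Fin d, ‖σ (A i j)‖ ^ 2
        ≤ ∑ _i : Fin d, ∑ _j : Fin d, c ^ 2 := by
          refine Finset.sum_le_sum fun i _ => Finset.sum_le_sum fun j _ => ?_
          exact pow_le_pow_left₀ (norm_nonneg _) (hA σ i j) 2
      _ = d * d * c ^ 2 := by simp [Finset.sum_const, Finset.card_univ]; ring
  calc ∑ σ : K →+* ℂ, ∑ i : Fin d, ∑ j : Fin d, ‖σ (A i j)‖ ^ 2
      ≤ ∑ _σ : K →+* ℂ, (d * d * c ^ 2 : ℝ) := Finset.sum_le_sum fun σ _ => hb σ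
    _ = (Fintype.card (K →+* ℂ)) * (d * d * c ^ 2) := by
        simp [Finset.sum_const, Finset.card_univ]
    _ = (Real.sqrt (Fintype.card (K →+* ℂ)) * d * c) ^ 2 := by
        rw [mul_pow, mul_pow, Real.sq_sqrt (by positivity)]
        ring

lemma exists_integral_round (f : ℕ+) (x : CyclotomicField f ℚ) :
    ∃ a : CyclotomicField f ℚ, IsIntegral ℤ a ∧
      ∀ σ : CyclotomicField f ℚ →+* ℂ,
        ‖σ (x - a)‖ ≤ (Nat.totient (f : ℕ) : ℝ) / 2 := by
  letI := CyclotomicField.algebra (f : ℕ) ℚ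
  have hζ := IsCyclotomicExtension.zeta_spec f ℚ (CyclotomicField f ℚ)
  set ζ : CyclotomicField f ℚ := IsCyclotomicExtension.zeta f ℚ (CyclotomicField f ℚ) with hζdef
  set B := hζ.powerBasis ℚ with hB
  have hgen : B.gen = ζ := rfl
  have hdim : B.dim = Nat.totient (f : ℕ) := by
    have h1 : Module.finrank ℚ (CyclotomicField f ℚ) = Nat.totient (f : ℕ) :=
      IsCyclotomicExtension.finrank (CyclotomicField f ℚ) (Polynomial.cyclotomic.irreducible_rat f.pos)
    rw [← h1, ← B.finrank]
  have hint : IsIntegral ℤ ζ := hζ.isIntegral f.pos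
  set c : Fin B.dim → ℚ := fun i => B.basis.repr x i with hc
  set a : CyclotomicField f ℚ := ∑ i : Fin B.dim, ((round (c i) : ℚ)) • B.basis i with ha
  refine ⟨a, ?_, ?_⟩
  · rw [ha]
    refine IsIntegral.sum _ fun i _ => ?_
    have hbi : B.basis i = ζ ^ (i : ℕ) := by rw [B.coe_basis, hgen]
    rw [hbi]
    have h2 : ((round (c i) : ℚ)) • ζ ^ (i : ℕ)
        = ((round (c i) : ℤ) : CyclotomicField f ℚ) * ζ ^ (i : ℕ) := by
      rw [← zsmul_eq_mul, ← Int.cast_smul_eq_zsmul ℚ]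
    rw [h2]
    have h3 : IsIntegral ℤ ((round (c i) : ℤ) : CyclotomicField f ℚ) := by
      have := isIntegral_algebraMap (R := ℤ) (A := CyclotomicField f ℚ) (x := round (c i))
      rwa [eq_intCast] at this
    exact h3.mul (hint.pow _)
  · intro σ
    have hx : x = ∑ i : Fin B.dim, (c i) • B.basis i := (B.basis.sum_repr x).symm
    have hxa : x - a = ∑ i : Fin B.dim, ((c i - round (c i) : ℚ)) • B.basis i := by
      rw [hx, ha, ← Finset.sum_sub_distrib]
      refine Finset.sum_congr rfl fun i _ => ?_
      rw [← sub_smul]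
    have habs : ‖σ ζ‖ = 1 := by
      refine Complex.norm_eq_one_of_pow_eq_one (n := (f : ℕ)) ?_ f.ne_zero
      rw [← map_pow, hζ.pow_eq_one, _root_.map_one]
    rw [hxa, map_sum]
    refine (norm_sum_le _ _).trans ?_
    have hterm : ∀ i : Fin B.dim,
        ‖σ (((c i - round (c i) : ℚ)) • B.basis i)‖ ≤ 1 / 2 := by
      intro i
      have hbi : B.basis i = ζ ^ (i : ℕ) := by rw [B.coe_basis, hgen]
      rw [hbi]
      have hs : ((c i - round (c i) : ℚ)) • ζ ^ (i : ℕ)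
          = ((c i - round (c i) : ℚ) : CyclotomicField f ℚ) * ζ ^ (i : ℕ) := by
        rw [Algebra.smul_def, eq_ratCast]
      rw [hs, _root_.map_mul, map_pow, norm_mul, norm_pow, habs, one_pow, mul_one,
        map_ratCast, Complex.norm_ratCast]
      have h4 := abs_sub_round (c i)
      have : |((c i - round (c i) : ℚ) : ℝ)| ≤ ((1:ℚ)/2 : ℝ) := by
        rw [← Rat.cast_abs]
        exact_mod_cast h4
      simpa using this
    calc ∑ i : Fin B.dim, ‖σ (((c i - round (c i) : ℚ)) • B.basis i)‖
        ≤ ∑ _i : Fin B.dim, (1 / 2 : ℝ) := Finset.sum_le_sum fun i _ => hterm i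
      _ = (B.dim : ℝ) / 2 := by simp [Finset.sum_const]; ring
      _ = (Nat.totient (f : ℕ) : ℝ) / 2 := by rw [hdim]

set_option maxHeartbeats 2000000 in
lemma seysen_aux (f : ℕ+) (hn2 : 2 ≤ Nat.totient (f : ℕ)) (d : ℕ) :
    ∀ M : Matrix (Fin d) (Fin d) (CyclotomicField f ℚ),
    M.BlockTriangular id → (∀ i, M i i = 1) →
    ∃ U : Matrix (Fin d) (Fin d) (CyclotomicField f ℚ),
      U.BlockTriangular id ∧ (∀ i, U i i = 1) ∧ (∀ i j, IsIntegral ℤ (U i j)) ∧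
      (∀ (σ : CyclotomicField f ℚ →+* ℂ) i j,
        ‖σ ((M * U) i j)‖ ≤ ((Nat.totient (f : ℕ) : ℝ) * d / 2) ^ Nat.clog 2 d) ∧
      (∀ (σ : CyclotomicField f ℚ →+* ℂ) i j,
        ‖σ ((M * U)⁻¹ i j)‖ ≤ ((Nat.totient (f : ℕ) : ℝ) * d / 2) ^ Nat.clog 2 d) := by
  induction d using Nat.strong_induction_on with
  | _ d ih =>
  intro M hM hMd
  rcases lt_or_ge d 2 with hd2 | hd2
  · -- base cases d = 0, 1
    interval_cases d
    · exact ⟨1, blockTriangular_one, fun i => i.elim0, fun i => i.elim0,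
        fun σ i => i.elim0, fun σ i => i.elim0⟩
    · have hM1 : M = 1 := by
        ext i j
        rw [Subsingleton.elim j i, hMd i, Matrix.one_apply_eq]
      refine ⟨1, blockTriangular_one, fun i => Matrix.one_apply_eq i, ?_, ?_, ?_⟩
      · intro i j
        rw [Subsingleton.elim j i, Matrix.one_apply_eq]
        exact isIntegral_one
      · intro σ i j
        rw [hM1, mul_one, Subsingleton.elim j i, Matrix.one_apply_eq, _root_.map_one,
          norm_one, Nat.clog_one_right, pow_zero]
      · intro σ i j
        rw [hM1, mul_one, inv_one, Subsingleton.elim j i, Matrix.one_apply_eq,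
          _root_.map_one, norm_one, Nat.clog_one_right, pow_zero]
  · -- main case
    set n := Nat.totient (f : ℕ) with hn
    set b := d / 2 with hbdef
    set a := d - d / 2 with hadef
    have hab : a + b = d := by omega
    have ha : a < d := by omega
    have hb : b < d := by omega
    have hb1 : 1 ≤ b := by omega
    have ha1 : 1 ≤ a := by omega
    have hba : b ≤ a := by omega
    set e : Fin a ⊕ Fin b ≃ Fin d := finSumFinEquiv.trans (finCongr hab) with he
    have he1 : ∀ i : Fin a, ((e (Sum.inl i)) : ℕ) = (i : ℕ) := by
      intro i; simp [he, finCongr_apply]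
    have he2 : ∀ j : Fin b, ((e (Sum.inr j)) : ℕ) = a + (j : ℕ) := by
      intro j; simp [he, finCongr_apply]
    set M' := M.submatrix e e with hM'
    set A := M'.toBlocks₁₁ with hA
    set B := M'.toBlocks₁₂ with hB
    set C := M'.toBlocks₂₂ with hC
    have hA_tri : A.BlockTriangular id := by
      intro i j hij
      refine hM (show (e (Sum.inl j)) < (e (Sum.inl i)) from ?_)
      rw [Fin.lt_def, he1, he1]
      exact Fin.lt_def.mp hij
    have hA_diag : ∀ i, A i i = 1 := fun i => hMd _
    have hC_tri : C.BlockTriangular id := by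
      intro i j hij
      refine hM (show (e (Sum.inr j)) < (e (Sum.inr i)) from ?_)
      rw [Fin.lt_def, he2, he2]
      exact Nat.add_lt_add_left (Fin.lt_def.mp hij) a
    have hC_diag : ∀ i, C i i = 1 := fun i => hMd _
    have hM21 : M'.toBlocks₂₁ = 0 := by
      ext i j
      simp only [Matrix.zero_apply]
      refine hM (show (e (Sum.inl j)) < (e (Sum.inr i)) from ?_)
      rw [Fin.lt_def, he1, he2]
      omega
    obtain ⟨UA, hUA_tri, hUA_diag, hUA_int, hRA_bnd, hRAi_bnd⟩ := ih a ha A hA_tri hA_diag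
    obtain ⟨UC, hUC_tri, hUC_diag, hUC_int, hRC_bnd, hRCi_bnd⟩ := ih b hb C hC_tri hC_diag
    set RA := A * UA with hRA
    set RC := C * UC with hRC
    have hdetRA : RA.det = 1 := by
      rw [hRA, Matrix.det_mul, Matrix.det_of_upperTriangular hA_tri,
        Matrix.det_of_upperTriangular hUA_tri]
      simp [hA_diag, hUA_diag]
    have hdetRC : RC.det = 1 := by
      rw [hRC, Matrix.det_mul, Matrix.det_of_upperTriangular hC_tri,
        Matrix.det_of_upperTriangular hUC_tri]
      simp [hC_diag, hUC_diag]
    have hRAinv : RA * RA⁻¹ = 1 := Matrix.mul_nonsing_inv _ (by rw [hdetRA]; exact isUnit_one)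
    have hRCinv : RC * RC⁻¹ = 1 := Matrix.mul_nonsing_inv _ (by rw [hdetRC]; exact isUnit_one)
    choose g hg_int hg_bnd using fun (i : Fin a) (j : Fin b) =>
      exists_integral_round f ((RA⁻¹ * (B * UC)) i j)
    set V : Matrix (Fin a) (Fin b) (CyclotomicField f ℚ) := Matrix.of fun i j => - g i j with hV
    set E : Matrix (Fin a) (Fin b) (CyclotomicField f ℚ) := V + RA⁻¹ * (B * UC) with hE
    have hE_bnd : ∀ (σ : CyclotomicField f ℚ →+* ℂ) i j, ‖σ (E i j)‖ ≤ (n:ℝ)/2 := by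
      intro σ i j
      have h0 : E i j = (RA⁻¹ * (B * UC)) i j - g i j := by
        rw [hE, Matrix.add_apply]
        show - g i j + _ = _
        ring
      rw [h0]
      exact hg_bnd i j σ
    set U : Matrix (Fin d) (Fin d) (CyclotomicField f ℚ) :=
      (Matrix.fromBlocks UA (UA * V) 0 UC).submatrix e.symm e.symm with hU
    have hU_tri : U.BlockTriangular id := by
      intro i j hij
      have hij' : (j:ℕ) < (i:ℕ) := by
        have h7 := hij
        simp only [id_eq] at h7
        exact Fin.lt_def.mp h7
      have hi := e.apply_symm_apply i
      have hj := e.apply_symm_apply j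
      show (Matrix.fromBlocks UA (UA * V) 0 UC) (e.symm i) (e.symm j) = 0
      rcases hsi : e.symm i with p | p <;> rcases hsj : e.symm j with q | q
      · have hip : (i : ℕ) = (p:ℕ) := by rw [← hi, hsi, he1]
        have hjq : (j : ℕ) = (q:ℕ) := by rw [← hj, hsj, he1]
        exact hUA_tri (Fin.lt_def.mpr (show (q:ℕ) < (p:ℕ) by omega))
      · exfalso
        have hip : (i:ℕ) = (p:ℕ) := by rw [← hi, hsi, he1]
        have hjq : (j:ℕ) = a + q := by rw [← hj, hsj, he2]
        have := p.isLt
        omega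
      · rfl
      · have hip : (i:ℕ) = a + p := by rw [← hi, hsi, he2]
        have hjq : (j:ℕ) = a + q := by rw [← hj, hsj, he2]
        exact hUC_tri (Fin.lt_def.mpr (show (q:ℕ) < (p:ℕ) by omega))
    have hU_diag : ∀ i, U i i = 1 := by
      intro i
      show (Matrix.fromBlocks UA (UA * V) 0 UC) (e.symm i) (e.symm i) = 1
      rcases e.symm i with p | p
      · exact hUA_diag p
      · exact hUC_diag p
    have hU_int : ∀ i j, IsIntegral ℤ (U i j) := by
      intro i j
      show IsIntegral ℤ ((Matrix.fromBlocks UA (UA * V) 0 UC) (e.symm i) (e.symm j))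
      rcases e.symm i with p | p <;> rcases e.symm j with q | q
      · exact hUA_int p q
      · show IsIntegral ℤ ((UA * V) p q)
        rw [Matrix.mul_apply]
        exact IsIntegral.sum _ fun k _ => (hUA_int p k).mul ((hg_int k q).neg)
      · exact isIntegral_zero
      · exact hUC_int p q
    have hMeq : M = (Matrix.fromBlocks A B 0 C).submatrix e.symm e.symm := by
      have h1 : Matrix.fromBlocks A B 0 C = M' := by
        rw [← hM21, hA, hB, hC, Matrix.fromBlocks_toBlocks]
      rw [h1, hM', Matrix.submatrix_submatrix, Equiv.self_comp_symm,
        Matrix.submatrix_id_id]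
    have hTR : A * (UA * V) + B * UC = RA * E := by
      have h2 : A * (UA * V) = RA * V := by rw [hRA, Matrix.mul_assoc]
      rw [h2, hE, Matrix.mul_add]
      congr 1
      rw [← Matrix.mul_assoc, hRAinv, Matrix.one_mul]
    have hMU : M * U = (Matrix.fromBlocks RA (RA * E) 0 RC).submatrix e.symm e.symm := by
      rw [hMeq, hU, Matrix.submatrix_mul_equiv, Matrix.fromBlocks_multiply]
      simp only [Matrix.mul_zero, Matrix.zero_mul, add_zero, zero_add, hTR, ← hRA, ← hRC]
    have hMUinv : (M * U)⁻¹ =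
        (Matrix.fromBlocks RA⁻¹ (-(E * RC⁻¹)) 0 RC⁻¹).submatrix e.symm e.symm := by
      refine Matrix.inv_eq_right_inv ?_
      rw [hMU, Matrix.submatrix_mul_equiv, Matrix.fromBlocks_multiply]
      have h1 : RA * RA⁻¹ + RA * E * (0 : Matrix (Fin b) (Fin a) (CyclotomicField f ℚ))
          = (1 : Matrix (Fin a) (Fin a) (CyclotomicField f ℚ)) := by
        rw [Matrix.mul_zero, add_zero, hRAinv]
      have h2 : RA * -(E * RC⁻¹) + RA * E * RC⁻¹
          = (0 : Matrix (Fin a) (Fin b) (CyclotomicField f ℚ)) := by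
        rw [Matrix.mul_neg, ← Matrix.mul_assoc, neg_add_cancel]
      have h3 : (0 : Matrix (Fin b) (Fin a) (CyclotomicField f ℚ)) * RA⁻¹
          + RC * (0 : Matrix (Fin b) (Fin a) (CyclotomicField f ℚ))
          = (0 : Matrix (Fin b) (Fin a) (CyclotomicField f ℚ)) := by
        rw [Matrix.zero_mul, Matrix.mul_zero, add_zero]
      have h4 : (0 : Matrix (Fin b) (Fin a) (CyclotomicField f ℚ)) * -(E * RC⁻¹) + RC * RC⁻¹ = 1 := by
        rw [Matrix.zero_mul, zero_add, hRCinv]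
      rw [h1, h2, h3, h4, Matrix.fromBlocks_one, Matrix.submatrix_one_equiv]
    set L := Nat.clog 2 d with hLdef
    have hL1 : 1 ≤ L := Nat.clog_pos one_lt_two hd2
    have hLa : Nat.clog 2 a = L - 1 := by
      have haeq : a = (d + 2 - 1) / 2 := by omega
      rw [hLdef, Nat.clog_of_two_le one_lt_two hd2, haeq]
      omega
    have hLb : Nat.clog 2 b ≤ L - 1 := by
      rw [← hLa]; exact Nat.clog_mono_right 2 hba
    set D : ℝ := (n:ℝ) * d / 2 with hD
    have hn2' : (2:ℝ) ≤ (n:ℝ) := by exact_mod_cast hn2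
    have hd2' : (2:ℝ) ≤ (d:ℝ) := by exact_mod_cast hd2
    have hD1 : (1:ℝ) ≤ D := by rw [hD]; nlinarith
    have hD0 : (0:ℝ) ≤ D := le_trans zero_le_one hD1
    have hDL : D ^ L = D * D ^ (L - 1) := by
      rw [← pow_succ']
      congr 1
      omega
    have hcA : ((n:ℝ) * a / 2) ^ Nat.clog 2 a ≤ D ^ (L - 1) := by
      rw [hLa]
      refine pow_le_pow_left₀ (by positivity) ?_ _
      have h6 : (a:ℝ) ≤ (d:ℝ) := by exact_mod_cast ha.le
      rw [hD]; nlinarith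
    have hcB : ((n:ℝ) * b / 2) ^ Nat.clog 2 b ≤ D ^ (L - 1) := by
      calc ((n:ℝ) * b / 2) ^ Nat.clog 2 b ≤ D ^ Nat.clog 2 b := by
            refine pow_le_pow_left₀ (by positivity) ?_ _
            have h6 : (b:ℝ) ≤ (d:ℝ) := by exact_mod_cast hb.le
            rw [hD]; nlinarith
        _ ≤ D ^ (L-1) := pow_le_pow_right₀ hD1 hLb
    have hstep : D ^ (L-1) ≤ D ^ L := pow_le_pow_right₀ hD1 (by omega)
    have hDLpos : (0:ℝ) ≤ D ^ L := by positivity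
    have hcA0 : (0:ℝ) ≤ ((n:ℝ) * a / 2) ^ Nat.clog 2 a := by positivity
    have hcB0 : (0:ℝ) ≤ ((n:ℝ) * b / 2) ^ Nat.clog 2 b := by positivity
    have hR_bnd : ∀ (σ : CyclotomicField f ℚ →+* ℂ) i j, ‖σ ((M*U) i j)‖ ≤ D ^ L := by
      intro σ i j
      rw [hMU]
      show ‖σ ((Matrix.fromBlocks RA (RA*E) 0 RC) (e.symm i) (e.symm j))‖ ≤ D ^ L
      rcases e.symm i with p | p <;> rcases e.symm j with q | q
      · exact (hRA_bnd σ p q).trans (hcA.trans hstep)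
      · show ‖σ ((RA * E) p q)‖ ≤ D ^ L
        have h5 : ‖σ ((RA * E) p q)‖
            ≤ (a:ℝ) * (((n:ℝ)*a/2)^(Nat.clog 2 a) * ((n:ℝ)/2)) := by
          rw [Matrix.mul_apply, map_sum]
          refine (norm_sum_le _ _).trans ?_
          calc ∑ k, ‖σ (RA p k * E k q)‖
              ≤ ∑ _k : Fin a, ((n:ℝ)*a/2)^(Nat.clog 2 a) * ((n:ℝ)/2) := by
                refine Finset.sum_le_sum fun k _ => ?_
                rw [_root_.map_mul, norm_mul]
                exact mul_le_mul (hRA_bnd σ p k) (hE_bnd σ k q) (norm_nonneg _) hcA0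
            _ = (a:ℝ) * (((n:ℝ)*a/2)^(Nat.clog 2 a) * ((n:ℝ)/2)) := by
                simp [Finset.sum_const, Finset.card_univ]
        refine h5.trans ?_
        calc (a:ℝ) * (((n:ℝ)*a/2)^(Nat.clog 2 a) * ((n:ℝ)/2))
            ≤ (d:ℝ) * (D^(L-1) * ((n:ℝ)/2)) := by
              refine mul_le_mul (by exact_mod_cast ha.le)
                (mul_le_mul_of_nonneg_right hcA (by positivity)) (by positivity) (by positivity)
          _ = D * D^(L-1) := by rw [hD]; ring
          _ = D ^ L := hDL.symm
      · show ‖σ ((0 : Matrix (Fin b) (Fin a) (CyclotomicField f ℚ)) p q)‖ ≤ D ^ L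
        simp only [Matrix.zero_apply, map_zero, norm_zero]
        exact hDLpos
      · exact (hRC_bnd σ p q).trans (hcB.trans hstep)
    have hRi_bnd : ∀ (σ : CyclotomicField f ℚ →+* ℂ) i j, ‖σ ((M*U)⁻¹ i j)‖ ≤ D ^ L := by
      intro σ i j
      rw [hMUinv]
      show ‖σ ((Matrix.fromBlocks RA⁻¹ (-(E * RC⁻¹)) 0 RC⁻¹) (e.symm i) (e.symm j))‖ ≤ D ^ L
      rcases e.symm i with p | p <;> rcases e.symm j with q | q
      · exact (hRAi_bnd σ p q).trans (hcA.trans hstep)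
      · show ‖σ ((-(E * RC⁻¹)) p q)‖ ≤ D ^ L
        rw [Matrix.neg_apply, map_neg, norm_neg]
        have h5 : ‖σ ((E * RC⁻¹) p q)‖
            ≤ (b:ℝ) * (((n:ℝ)/2) * ((n:ℝ)*b/2)^(Nat.clog 2 b)) := by
          rw [Matrix.mul_apply, map_sum]
          refine (norm_sum_le _ _).trans ?_
          calc ∑ k, ‖σ (E p k * RC⁻¹ k q)‖
              ≤ ∑ _k : Fin b, ((n:ℝ)/2) * ((n:ℝ)*b/2)^(Nat.clog 2 b) := by
                refine Finset.sum_le_sum fun k _ => ?_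
                rw [_root_.map_mul, norm_mul]
                exact mul_le_mul (hE_bnd σ p k) (hRCi_bnd σ k q) (norm_nonneg _) (by positivity)
            _ = (b:ℝ) * (((n:ℝ)/2) * ((n:ℝ)*b/2)^(Nat.clog 2 b)) := by
                simp [Finset.sum_const, Finset.card_univ]
        refine h5.trans ?_
        calc (b:ℝ) * (((n:ℝ)/2) * ((n:ℝ)*b/2)^(Nat.clog 2 b))
            ≤ (d:ℝ) * (((n:ℝ)/2) * D^(L-1)) := by
              refine mul_le_mul (by exact_mod_cast hb.le)
                (mul_le_mul_of_nonneg_left hcB (by positivity)) (by positivity) (by positivity)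
          _ = D * D^(L-1) := by rw [hD]; ring
          _ = D ^ L := hDL.symm
      · show ‖σ ((0 : Matrix (Fin b) (Fin a) (CyclotomicField f ℚ)) p q)‖ ≤ D ^ L
        simp only [Matrix.zero_apply, map_zero, norm_zero]
        exact hDLpos
      · exact (hRCi_bnd σ p q).trans (hcB.trans hstep)
    exact ⟨U, hU_tri, hU_diag, hU_int, hR_bnd, hRi_bnd⟩



/-- Seysen size-reduction over cyclotomic fields (exact arithmetic): every unitriangular
matrix `M` over `ℚ(ζ_f)` admits an integral unitriangular transformation `U` such that both
`‖MU‖` and `‖(MU)⁻¹‖` are at most `(n^{3/2} d)^{⌈log₂ d⌉}` for the operator norm induced by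
the canonical embedding into `ℂ^{nd}`. -/
theorem seysen_size_reduction_exists (f : ℕ+) (hf : 3 ≤ (f : ℕ)) (d : ℕ) (hd : 1 ≤ d)
    (M : Matrix (Fin d) (Fin d) (CyclotomicField f ℚ))
    (hM : M.BlockTriangular id) (hMdiag : ∀ i, M i i = 1) :
    ∃ U : Matrix (Fin d) (Fin d) (CyclotomicField f ℚ),
      U.BlockTriangular id ∧ (∀ i, U i i = 1) ∧
      (∀ i j, IsIntegral ℤ (U i j)) ∧
      ‖embMatrix (M * U)‖ ≤
        ((Nat.totient (f : ℕ) : ℝ) ^ ((3 : ℝ) / 2) * (d : ℝ)) ^ (Nat.clog 2 d) ∧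
      ‖embMatrix (M * U)⁻¹‖ ≤
        ((Nat.totient (f : ℕ) : ℝ) ^ ((3 : ℝ) / 2) * (d : ℝ)) ^ (Nat.clog 2 d) := by
  have hn2 : 2 ≤ Nat.totient (f : ℕ) := by
    have hev := Nat.totient_even (show 2 < (f : ℕ) by omega)
    have hpos : 0 < Nat.totient (f : ℕ) := Nat.totient_pos.mpr f.pos
    rcases hev with ⟨k, hk⟩
    omega
  rcases eq_or_lt_of_le hd with hd1 | hd2
  · -- d = 1
    subst hd1
    have hM1 : M = 1 := by
      ext i j
      rw [Subsingleton.elim j i, hMdiag, Matrix.one_apply_eq]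
    refine ⟨1, blockTriangular_one, fun i => Matrix.one_apply_eq i, ?_, ?_, ?_⟩
    · intro i j
      rw [Subsingleton.elim j i, Matrix.one_apply_eq]
      exact isIntegral_one
    · rw [hM1, mul_one, embMatrix_one, Nat.clog_one_right, pow_zero]
      exact norm_one_matrix_le
    · rw [hM1, mul_one, inv_one, embMatrix_one, Nat.clog_one_right, pow_zero]
      exact norm_one_matrix_le
  · -- 2 ≤ d
    have hd2' : 2 ≤ d := hd2
    obtain ⟨U, hU_tri, hU_diag, hU_int, hR_bnd, hRi_bnd⟩ :=
      seysen_aux f hn2 d M hM hMdiag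
    set n := Nat.totient (f : ℕ) with hn
    set L := Nat.clog 2 d with hLdef
    have hL1 : 1 ≤ L := Nat.clog_pos one_lt_two hd2'
    have hcard : (Fintype.card (CyclotomicField f ℚ →+* ℂ)) = n := by
      rw [NumberField.Embeddings.card (CyclotomicField f ℚ) ℂ]
      letI := CyclotomicField.algebra (f : ℕ) ℚ
      have h := IsCyclotomicExtension.finrank (CyclotomicField f ℚ)
        (Polynomial.cyclotomic.irreducible_rat f.pos)
      have hA : (DivisionRing.toRatAlgebra : Algebra ℚ (CyclotomicField f ℚ)) = this :=
        Subsingleton.elim _ _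
      rw [hA]
      exact h
    have hn1 : (1:ℝ) ≤ (n:ℝ) := by exact_mod_cast le_trans one_le_two hn2
    have hnpos : (0:ℝ) < (n:ℝ) := lt_of_lt_of_le zero_lt_one hn1
    have hs1 : 1 ≤ Real.sqrt (n:ℝ) := Real.one_le_sqrt.mpr hn1
    have h2L : (d:ℝ) ≤ 2 ^ L := by exact_mod_cast Nat.le_pow_clog one_lt_two d
    have e1 : Real.sqrt (n:ℝ) * d ≤ Real.sqrt (n:ℝ) ^ L * 2 ^ L :=
      mul_le_mul (le_self_pow₀ hs1 (by omega)) h2L (by positivity) (by positivity)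
    have h32 : (n:ℝ) ^ ((3:ℝ)/2) = (n:ℝ) * Real.sqrt (n:ℝ) := by
      rw [show (3:ℝ)/2 = 1 + 1/2 by norm_num, Real.rpow_add hnpos, Real.rpow_one,
        ← Real.sqrt_eq_rpow]
    have h2Lne : ((2:ℝ)) ^ L ≠ 0 := by positivity
    have main : Real.sqrt (n:ℝ) * d * ((n:ℝ) * d / 2) ^ L
        ≤ ((n:ℝ) ^ ((3:ℝ)/2) * d) ^ L := by
      calc Real.sqrt (n:ℝ) * d * ((n:ℝ) * d / 2) ^ L
          = (Real.sqrt (n:ℝ) * d) * (((n:ℝ) ^ L * (d:ℝ) ^ L) / 2 ^ L) := by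
            rw [div_pow, mul_pow]
        _ ≤ (Real.sqrt (n:ℝ) ^ L * 2 ^ L) * (((n:ℝ) ^ L * (d:ℝ) ^ L) / 2 ^ L) := by
            refine mul_le_mul_of_nonneg_right e1 (by positivity)
        _ = (n:ℝ) ^ L * Real.sqrt (n:ℝ) ^ L * (d:ℝ) ^ L := by
            field_simp
        _ = ((n:ℝ) * Real.sqrt (n:ℝ) * d) ^ L := by rw [mul_pow, mul_pow]
        _ = ((n:ℝ) ^ ((3:ℝ)/2) * d) ^ L := by rw [h32]
    have hDL0 : (0:ℝ) ≤ ((n:ℝ) * d / 2) ^ L := by positivity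
    refine ⟨U, hU_tri, hU_diag, hU_int, ?_, ?_⟩
    · refine le_trans ?_ main
      have h := embMatrix_norm_le (M * U) (((n:ℝ) * d / 2) ^ L) hDL0 (hR_bnd)
      rwa [hcard] at h
    · refine le_trans ?_ main
      have h := embMatrix_norm_le ((M * U)⁻¹) (((n:ℝ) * d / 2) ^ L) hDL0 (hRi_bnd)
      rwa [hcard] at h
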